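/- arXiv:1108.1880 — 3 statements merged into one kernel-verified Lean document; each statement's English description precedes it below -/
import Mathlib

section
/- Let U, V be supertropical monoids and α: U → V a map. If U and V are supertropical semirings, then α is an h-transmission if and only if α is a semiring homomorphism. -/
universe u v w

class STM (U : Type u) extends CommMonoid U, Zero U where
  zero_mul' : ∀ x : U, 0 * x = 0
  e : U
  e_idem : e * e = e
  ghost_zero : ∀ x : U, e * x = 0 → x = 0
  le : U → U → Prop
  le_refl : ∀ x : U, le x x
  le_trans : ∀ x y z : U, le x y → le y z → le x z
  le_total : ∀ x y : U, le x y ∨ le y x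
  le_antisymm : ∀ x y : U, e * x = x → e * y = y → le x y → le y x → x = y
  le_e : ∀ x y : U, le x y ↔ le (e * x) (e * y)
  mul_le_mul : ∀ x y z : U, le x y → le (x * z) (y * z)
  zero_le : ∀ x : U, le 0 x

namespace STM

variable {U : Type u} [STM U]

/-- `x` is a ghost element, i.e. `x ∈ eU`. -/
def Ghost (x : U) : Prop := e * x = x

/-- strict inequality for the ordering of the ghost ideal -/
def slt (x y : U) : Prop := le x y ∧ ¬ le y x

open scoped Classical in
/-- the forced addition on a supertropical monoid -/
noncomputable def add (x y : U) : U :=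
  if slt (e * x) (e * y) then y
  else if slt (e * y) (e * x) then x
  else e * x

/-- the supertropical monoid `U` "is" a (supertropical) semiring: the forced
addition is associative and distributive. -/
def IsSemiring (U : Type u) [STM U] : Prop :=
  (∀ x y z : U, add (add x y) z = add x (add y z)) ∧
  (∀ x y z : U, add x y * z = add (x * z) (y * z))

end STM

open STM

/-- A transmission between supertropical monoids. -/
structure IsTransmission {U : Type u} {V : Type v} [STM U] [STM V] (α : U → V) : Prop where
  map_zero : α 0 = 0
  map_one : α 1 = 1
  map_mul : ∀ x y : U, α (x * y) = α x * α y
  map_e : α (STM.e : U) = (STM.e : V)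
  mono : ∀ x y : U, Ghost x → Ghost y → STM.le x y → STM.le (α x) (α y)


/-- An h-transmission between supertropical monoids. -/
def IsHTransmission {U : Type u} {V : Type v} [STM U] [STM V] (α : U → V) : Prop :=
  IsTransmission α ∧
  ∀ x y : U, slt (STM.e * x) (STM.e * y) → α (STM.e * x) = α (STM.e * y) → Ghost (α y)

namespace STM

variable {U : Type u} [STM U]

lemma emul_emul (x : U) : (e : U) * (e * x) = e * x := by
  rw [← mul_assoc, e_idem]

lemma ghost_emul (x : U) : Ghost ((e : U) * x) := emul_emul x

lemma slt_irrefl (a : U) : ¬ slt a a := fun h => h.2 (STM.le_refl a)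

lemma not_slt_of_eq {a b : U} (h : a = b) : ¬ slt a b := h ▸ slt_irrefl a

lemma add_eq_right {x y : U} (h : slt ((e : U) * x) (e * y)) : add x y = y := by
  rw [add, if_pos h]

lemma add_eq_left {x y : U} (h : slt ((e : U) * y) (e * x)) : add x y = x := by
  rw [add, if_neg (fun h' => h'.2 h.1), if_pos h]

lemma add_eq_e {x y : U} (h1 : ¬ slt ((e : U) * x) (e * y))
    (h2 : ¬ slt ((e : U) * y) (e * x)) : add x y = e * x := by
  rw [add, if_neg h1, if_neg h2]

lemma eq_of_not_slt {a b : U} (ha : Ghost a) (hb : Ghost b)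
    (h1 : ¬ slt a b) (h2 : ¬ slt b a) : a = b := by
  rcases STM.le_total a b with h | h
  · have hba : le b a := by
      by_contra hn; exact h1 ⟨h, hn⟩
    exact STM.le_antisymm a b ha hb h hba
  · have hab : le a b := by
      by_contra hn; exact h2 ⟨h, hn⟩
    exact STM.le_antisymm a b ha hb hab h

lemma le_add (p q : U) : le p (add p q) := by
  by_cases h1 : slt ((e : U) * p) (e * q)
  · rw [add_eq_right h1]
    exact (STM.le_e p q).2 h1.1
  · by_cases h2 : slt ((e : U) * q) (e * p)
    · rw [add_eq_left h2]; exact STM.le_refl p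
    · rw [add_eq_e h1 h2]
      have h3 : le ((e : U) * p) (e * (e * p)) := by
        rw [emul_emul]; exact STM.le_refl _
      exact (STM.le_e p (e * p)).2 h3

end STM

/-- Between supertropical semirings, a map is an h-transmission iff it is a semiring
homomorphism (for the forced additions). -/
theorem hTransmission_iff_semiring_hom {U : Type u} {V : Type v} [STM U] [STM V]
    (hU : IsSemiring U) (hV : IsSemiring V) (α : U → V) :
    IsHTransmission α ↔
      (α 0 = 0 ∧ α 1 = 1 ∧ (∀ x y : U, α (x * y) = α x * α y) ∧
        ∀ x y : U, α (add x y) = add (α x) (α y)) := by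
  constructor
  · rintro ⟨ht, hh⟩
    refine ⟨ht.map_zero, ht.map_one, ht.map_mul, ?_⟩
    intro x y
    have hA : α ((e : U) * x) = (e : V) * α x := by rw [ht.map_mul, ht.map_e]
    have hB : α ((e : U) * y) = (e : V) * α y := by rw [ht.map_mul, ht.map_e]
    by_cases h1 : slt ((e : U) * x) (e * y)
    · rw [add_eq_right h1]
      have hle : STM.le ((e : V) * α x) ((e : V) * α y) := by
        rw [← hA, ← hB]
        exact ht.mono _ _ (ghost_emul x) (ghost_emul y) h1.1
      by_cases h1' : slt ((e : V) * α x) ((e : V) * α y)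
      · rw [add_eq_right h1']
      · have hba : STM.le ((e : V) * α y) ((e : V) * α x) := by
          by_contra hn; exact h1' ⟨hle, hn⟩
        have heq : (e : V) * α x = (e : V) * α y :=
          STM.le_antisymm _ _ (ghost_emul _) (ghost_emul _) hle hba
        have hg : Ghost (α y) := hh x y h1 (by rw [hA, hB, heq])
        rw [add_eq_e h1' (not_slt_of_eq heq.symm), heq, hg]
    · by_cases h2 : slt ((e : U) * y) (e * x)
      · rw [add_eq_left h2]
        have hle : STM.le ((e : V) * α y) ((e : V) * α x) := by
          rw [← hA, ← hB]
          exact ht.mono _ _ (ghost_emul y) (ghost_emul x) h2.1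
        by_cases h2' : slt ((e : V) * α y) ((e : V) * α x)
        · rw [add_eq_left h2']
        · have hba : STM.le ((e : V) * α x) ((e : V) * α y) := by
            by_contra hn; exact h2' ⟨hle, hn⟩
          have heq : (e : V) * α y = (e : V) * α x :=
            STM.le_antisymm _ _ (ghost_emul _) (ghost_emul _) hle hba
          have hg : Ghost (α x) := hh y x h2 (by rw [hA, hB, heq])
          rw [add_eq_e (not_slt_of_eq heq.symm) h2', hg]
      · have heq : (e : U) * x = (e : U) * y :=
          eq_of_not_slt (ghost_emul x) (ghost_emul y) h1 h2
        have heq' : (e : V) * α x = (e : V) * α y := by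
          rw [← hA, ← hB, heq]
        rw [add_eq_e h1 h2, add_eq_e (not_slt_of_eq heq') (not_slt_of_eq heq'.symm), hA]
  · rintro ⟨h0, h1, hm, ha⟩
    have he : α (e : U) = (e : V) := by
      have hU1 : (add 1 1 : U) = e := by
        rw [add_eq_e (slt_irrefl _) (slt_irrefl _), mul_one]
      have hV1 : (add 1 1 : V) = e := by
        rw [add_eq_e (slt_irrefl _) (slt_irrefl _), mul_one]
      calc α (e : U) = α (add 1 1) := by rw [hU1]
        _ = add (α 1) (α 1) := ha 1 1
        _ = add 1 1 := by rw [h1]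
        _ = e := hV1
    have hmul_e : ∀ x : U, α ((e : U) * x) = (e : V) * α x := fun x => by
      rw [hm, he]
    have mono : ∀ x y : U, Ghost x → Ghost y → STM.le x y → STM.le (α x) (α y) := by
      intro x y hx hy hxy
      by_cases hyx : STM.le y x
      · rw [STM.le_antisymm x y hx hy hxy hyx]; exact STM.le_refl _
      · have hslt : slt ((e : U) * x) ((e : U) * y) := by
          rw [hx, hy]; exact ⟨hxy, hyx⟩
        have : α y = add (α x) (α y) := by rw [← ha, add_eq_right hslt]
        rw [this]; exact le_add _ _
    refine ⟨⟨h0, h1, hm, he, mono⟩, ?_⟩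
    intro x y hslt heq
    have hslt' : slt ((e : U) * ((e : U) * x)) ((e : U) * y) := by
      rw [emul_emul]; exact hslt
    have hy : α y = add (α ((e : U) * x)) (α y) := by
      rw [← ha, add_eq_right hslt']
    have hAB : (e : V) * α x = (e : V) * α y := by
      rw [← hmul_e, ← hmul_e, heq]
    have hEA : (e : V) * α ((e : U) * x) = (e : V) * α y := by
      rw [hmul_e, emul_emul, hAB]
    rw [add_eq_e (not_slt_of_eq hEA) (not_slt_of_eq hEA.symm), hEA] at hy
    have : Ghost (α y) := by
      unfold Ghost
      rw [hy, emul_emul]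
    exact this
end

section
/- Let α: U → V be a surjective h-transmission between supertropical monoids. If U is a semiring, then V is a semiring. -/
universe u v w

open STM

section Aux

variable {U : Type u} [STM U]

lemma slt_irrefl' (a : U) : ¬ slt a a := fun h => h.2 (STM.le_refl a)

lemma ghost_e_mul' (x : U) : Ghost (STM.e * x) := by
  unfold Ghost; rw [← mul_assoc, STM.e_idem]

lemma le_of_not_slt' {a b : U} (h : ¬ slt a b) (h' : STM.le a b) : STM.le b a := by
  by_contra hc; exact h ⟨h', hc⟩

variable {V : Type v} [STM V] {α : U → V}

lemma hmul_e (ht : IsTransmission α) (z : U) : STM.e * α z = α (STM.e * z) := by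
  rw [ht.map_mul, ht.map_e]

lemma slt_congr {W : Type w} [STM W] {a b a' b' : W} (ha : a = a') (hb : b = b') :
    slt a b ↔ slt a' b' := by rw [ha, hb]

lemma stm_map_add (hα : IsHTransmission α) (x y : U) :
    α (STM.add x y) = STM.add (α x) (α y) := by
  obtain ⟨ht, hh⟩ := hα
  have gx : Ghost (STM.e * x) := ghost_e_mul' x
  have gy : Ghost (STM.e * y) := ghost_e_mul' y
  have gAx : Ghost (α (STM.e * x)) := by
    unfold Ghost; rw [hmul_e ht, ← mul_assoc, STM.e_idem]
  have gAy : Ghost (α (STM.e * y)) := by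
    unfold Ghost; rw [hmul_e ht, ← mul_assoc, STM.e_idem]
  have cong : slt (STM.e * α x) (STM.e * α y) ↔ slt (α (STM.e * x)) (α (STM.e * y)) :=
    slt_congr (hmul_e ht x) (hmul_e ht y)
  have cong' : slt (STM.e * α y) (STM.e * α x) ↔ slt (α (STM.e * y)) (α (STM.e * x)) :=
    slt_congr (hmul_e ht y) (hmul_e ht x)
  unfold STM.add
  by_cases h1 : slt (STM.e * x) (STM.e * y)
  · rw [if_pos h1]
    have hle : STM.le (α (STM.e * x)) (α (STM.e * y)) := ht.mono _ _ gx gy h1.1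
    by_cases h1' : slt (α (STM.e * x)) (α (STM.e * y))
    · rw [if_pos (cong.mpr h1')]
    · have hle' := le_of_not_slt' h1' hle
      have heq : α (STM.e * x) = α (STM.e * y) :=
        STM.le_antisymm _ _ gAx gAy hle hle'
      have h2' : ¬ slt (α (STM.e * y)) (α (STM.e * x)) := by
        rw [heq]; exact slt_irrefl' _
      rw [if_neg (fun h => h1' (cong.mp h)), if_neg (fun h => h2' (cong'.mp h))]
      have hg : Ghost (α y) := hh x y h1 heq
      unfold Ghost at hg
      rw [← hg, hmul_e ht, hmul_e ht, heq]
  · by_cases h2 : slt (STM.e * y) (STM.e * x)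
    · rw [if_neg h1, if_pos h2]
      have hle : STM.le (α (STM.e * y)) (α (STM.e * x)) := ht.mono _ _ gy gx h2.1
      have h1' : ¬ slt (α (STM.e * x)) (α (STM.e * y)) := fun hs => hs.2 hle
      by_cases h2' : slt (α (STM.e * y)) (α (STM.e * x))
      · rw [if_neg (fun h => h1' (cong.mp h)), if_pos (cong'.mpr h2')]
      · have hle' := le_of_not_slt' h2' hle
        have heq : α (STM.e * y) = α (STM.e * x) :=
          STM.le_antisymm _ _ gAy gAx hle hle'
        rw [if_neg (fun h => h1' (cong.mp h)), if_neg (fun h => h2' (cong'.mp h))]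
        have hg : Ghost (α x) := hh y x h2 heq
        unfold Ghost at hg
        exact hg.symm
    · have hle : STM.le (STM.e * x) (STM.e * y) := by
        rcases STM.le_total (STM.e * x) (STM.e * y) with h | h
        · exact h
        · exact le_of_not_slt' h2 h
      have hle' := le_of_not_slt' h1 hle
      have heqU : STM.e * x = STM.e * y := STM.le_antisymm _ _ gx gy hle hle'
      have heq : α (STM.e * x) = α (STM.e * y) := by rw [heqU]
      have h1' : ¬ slt (α (STM.e * x)) (α (STM.e * y)) := by
        rw [heq]; exact slt_irrefl' _
      have h2' : ¬ slt (α (STM.e * y)) (α (STM.e * x)) := by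
        rw [heq]; exact slt_irrefl' _
      rw [if_neg h1, if_neg h2, if_neg (fun h => h1' (cong.mp h)),
        if_neg (fun h => h2' (cong'.mp h)), hmul_e ht]
end Aux

/-- If `α : U → V` is a surjective h-transmission and `U` is a semiring, then `V` is a
semiring. -/
theorem semiring_of_surjective_hTransmission {U : Type u} {V : Type v} [STM U] [STM V]
    (α : U → V) (hα : IsHTransmission α) (hsurj : Function.Surjective α)
    (hU : IsSemiring U) :
    IsSemiring V := by
  have hadd := stm_map_add hα
  constructor
  · intro a b c
    obtain ⟨x, rfl⟩ := hsurj a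
    obtain ⟨y, rfl⟩ := hsurj b
    obtain ⟨z, rfl⟩ := hsurj c
    rw [← hadd, ← hadd, ← hadd, ← hadd, hU.1]
  · intro a b c
    obtain ⟨x, rfl⟩ := hsurj a
    obtain ⟨y, rfl⟩ := hsurj b
    obtain ⟨z, rfl⟩ := hsurj c
    rw [← hadd, ← hα.1.map_mul, ← hα.1.map_mul, ← hα.1.map_mul, hU.2, hadd]
end

section
/- Let U be a supertropical monoid with M = eU, and N a submonoid of U containing all tangibles and 0. Then an unfolding of U along N exists and is unique up to unique isomorphism: i.e., there is a fiber contraction τ: Ũ → U over M with Ũ unfolded (the set of tangibles together with 0 in Ũ is closed under multiplication), whose fibers are τ⁻¹(x) = {x, x̃} for x ∈ M ∩ N, {x̃} for x ∈ N \ M, {x} for x ∈ M \ N, with x̃ a tangible (or zero) lift; and any two such unfoldings are related by a unique isomorphism over U. -/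
universe u v w

open STM

/-- tangible or zero -/
def TangibleOrZero {U : Type u} [STM U] (x : U) : Prop := ¬ Ghost x ∨ x = 0

/-- `U` is unfolded: the tangibles together with `0` are closed under multiplication. -/
def IsUnfolded (U : Type u) [STM U] : Prop :=
  ∀ x y : U, TangibleOrZero x → TangibleOrZero y → TangibleOrZero (x * y)

/-- `τ : W → U` is an unfolding of `U` along the submonoid `N`. -/
def IsUnfolding {U : Type u} [STM U] {W : Type u} [STM W] (τ : W → U) (N : Set U) : Prop :=
  IsTransmission τ ∧ Function.Surjective τ ∧ IsUnfolded W ∧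
  (∀ x ∈ N, ∃! w : W, TangibleOrZero w ∧ τ w = x) ∧
  (∀ x : U, Ghost x → ∃! w : W, Ghost w ∧ τ w = x) ∧
  (∀ (x : U) (w : W), τ w = x → (TangibleOrZero w ∧ x ∈ N) ∨ (Ghost w ∧ Ghost x))

section UnfoldingAux

open scoped Classical

variable {U : Type u} [STM U]

lemma gzero : Ghost (0 : U) := by
  show STM.e * (0 : U) = 0
  rw [mul_comm]; exact STM.zero_mul' _

lemma mzero (x : U) : x * 0 = 0 := by rw [mul_comm]; exact STM.zero_mul' x

lemma ge' : Ghost (STM.e : U) := STM.e_idem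

lemma gmul {x : U} (hx : Ghost x) (y : U) : Ghost (x * y) := by
  show STM.e * (x * y) = x * y
  rw [← mul_assoc, show STM.e * x = x from hx]

variable {W : Type u} [STM W]

lemma ghost_tau {τ : W → U} (ht : IsTransmission τ) {w : W} (hw : Ghost w) :
    Ghost (τ w) := by
  show STM.e * τ w = τ w
  rw [← ht.map_e, ← ht.map_mul]
  exact congrArg τ hw

variable {τ : W → U} {N : Set U}

lemma classify (h : IsUnfolding τ N) (w : W) :
    (TangibleOrZero w ∧ τ w ∈ N) ∨ (Ghost w ∧ Ghost (τ w)) :=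
  h.2.2.2.2.2 (τ w) w rfl

lemma ghost_unique (h : IsUnfolding τ N) {w w' : W} (hw : Ghost w) (hw' : Ghost w')
    (he : τ w = τ w') : w = w' := by
  obtain ⟨g, -, hu⟩ := h.2.2.2.2.1 (τ w) (ghost_tau h.1 hw)
  exact (hu w ⟨hw, rfl⟩).trans (hu w' ⟨hw', he.symm⟩).symm

lemma tau_zero (h : IsUnfolding τ N) {w : W} (hw : τ w = 0) : w = 0 := by
  have hg1 : Ghost (STM.e * w) := gmul ge' w
  have hg2 : τ (STM.e * w) = 0 := by
    rw [h.1.map_mul, h.1.map_e, hw, mzero]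
  have hg3 : STM.e * w = (0 : W) :=
    ghost_unique h hg1 gzero (by rw [hg2, h.1.map_zero])
  exact STM.ghost_zero w hg3

lemma not_ghost_mem (h : IsUnfolding τ N) {w : W} (hw : ¬ Ghost w) : τ w ∈ N :=
  ((classify h w).resolve_right fun hh => hw hh.1).2

lemma tang_unique (h : IsUnfolding τ N) {w w' : W} (hw : TangibleOrZero w)
    (hw' : TangibleOrZero w') (he : τ w = τ w') : w = w' := by
  by_cases h0 : τ w = 0
  · rw [tau_zero h h0, tau_zero h (he.symm.trans h0)]
  · have hng : ¬ Ghost w := by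
      rcases hw with hw | hw
      · exact hw
      · exact absurd (by rw [hw, h.1.map_zero]) h0
    obtain ⟨t, -, hu⟩ := h.2.2.2.1 (τ w) (not_ghost_mem h hng)
    exact (hu w ⟨hw, rfl⟩).trans (hu w' ⟨hw', he.symm⟩).symm

lemma le_reflect (h : IsUnfolding τ N) {w w' : W} (hw : Ghost w) (hw' : Ghost w')
    (hle : STM.le (τ w) (τ w')) : STM.le w w' := by
  rcases STM.le_total w w' with h' | h'
  · exact h'
  · have h2 := h.1.mono w' w hw' hw h'
    have heq : τ w = τ w' :=
      STM.le_antisymm _ _ (ghost_tau h.1 hw) (ghost_tau h.1 hw') hle h2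
    rw [ghost_unique h hw hw' heq]
    exact STM.le_refl _

lemma one_eq_zero_of_ghost_one (h : IsUnfolding τ N) (h1 : (1 : U) ∈ N)
    (hg : Ghost (1 : W)) : (1 : U) = 0 := by
  have he1 : (STM.e : W) = 1 := by
    have h2 : STM.e * (1 : W) = 1 := hg
    rwa [mul_one] at h2
  obtain ⟨t, ⟨htz, hτt⟩, -⟩ := h.2.2.2.1 1 h1
  have hgt : Ghost t := by show STM.e * t = t; rw [he1, one_mul]
  have ht0 : t = 0 := htz.resolve_left (fun hh => hh hgt)
  rw [← hτt, ht0, h.1.map_zero]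

end UnfoldingAux

section UMap

variable {U : Type u} [STM U]

open scoped Classical in
noncomputable def umap {W1 W2 : Type u} [STM W1] [STM W2] {τ1 : W1 → U} {τ2 : W2 → U}
    {N : Set U} (H1 : IsUnfolding τ1 N) (H2 : IsUnfolding τ2 N) : W1 → W2 := fun w =>
  if h : Ghost w then (H2.2.2.2.2.1 (τ1 w) (ghost_tau H1.1 h)).exists.choose
  else (H2.2.2.2.1 (τ1 w) (not_ghost_mem H1 h)).exists.choose

variable {W1 W2 : Type u} [STM W1] [STM W2] {τ1 : W1 → U} {τ2 : W2 → U}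
    {N : Set U}

variable (H1 : IsUnfolding τ1 N) (H2 : IsUnfolding τ2 N)

lemma umap_tau (w : W1) : τ2 (umap H1 H2 w) = τ1 w := by
  by_cases h : Ghost w
  · rw [umap, dif_pos h]
    exact ((H2.2.2.2.2.1 (τ1 w) (ghost_tau H1.1 h)).exists.choose_spec).2
  · rw [umap, dif_neg h]
    exact ((H2.2.2.2.1 (τ1 w) (not_ghost_mem H1 h)).exists.choose_spec).2

lemma umap_ghost {w : W1} (hw : Ghost w) : Ghost (umap H1 H2 w) := by
  rw [umap, dif_pos hw]
  exact ((H2.2.2.2.2.1 (τ1 w) (ghost_tau H1.1 hw)).exists.choose_spec).1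

lemma umap_toz {w : W1} (hw : ¬ Ghost w) : TangibleOrZero (umap H1 H2 w) := by
  rw [umap, dif_neg hw]
  exact ((H2.2.2.2.1 (τ1 w) (not_ghost_mem H1 hw)).exists.choose_spec).1

lemma umap_not_ghost {w : W1} (hw : ¬ Ghost w) : ¬ Ghost (umap H1 H2 w) := by
  rcases umap_toz H1 H2 hw with h | h
  · exact h
  · exfalso
    apply hw
    have hz : τ1 w = 0 := by rw [← umap_tau H1 H2 w, h, H2.1.map_zero]
    rw [tau_zero H1 hz]
    exact gzero

lemma iso_unique (h1 : (1 : U) ∈ N) (H1 : IsUnfolding τ1 N) (H2 : IsUnfolding τ2 N) :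
    ∃! ρ : W1 → W2, IsTransmission ρ ∧ Function.Bijective ρ ∧
      ∀ w : W1, τ2 (ρ w) = τ1 w := by
  set ρ := umap H1 H2 with hρ
  set σ := umap H2 H1 with hσ
  have hτ : ∀ w, τ2 (ρ w) = τ1 w := umap_tau H1 H2
  have hτ' : ∀ w, τ1 (σ w) = τ2 w := umap_tau H2 H1
  have hz : ρ 0 = 0 :=
    ghost_unique H2 (umap_ghost H1 H2 gzero) gzero
      (by rw [hτ, H1.1.map_zero, H2.1.map_zero])
  have htrans : IsTransmission ρ := by
    constructor
    · exact hz
    · by_cases hg : Ghost (1 : W1)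
      · have h10 : (1 : U) = 0 := one_eq_zero_of_ghost_one H1 h1 hg
        have h1W2 : (1 : W2) = 0 := tau_zero H2 (by rw [H2.1.map_one, h10])
        have h1W1 : (1 : W1) = 0 := tau_zero H1 (by rw [H1.1.map_one, h10])
        rw [h1W1, h1W2, hz]
      · have hng2 : ¬ Ghost (1 : W2) := by
          intro hg2
          have h10 := one_eq_zero_of_ghost_one H2 h1 hg2
          apply hg
          have hw1 : (1 : W1) = 0 := tau_zero H1 (by rw [H1.1.map_one, h10])
          rw [hw1]
          exact gzero
        exact tang_unique H2 (umap_toz H1 H2 hg) (Or.inl hng2)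
          (by rw [hτ, H1.1.map_one, H2.1.map_one])
    · intro x y
      by_cases hx : Ghost x
      · have hxy : Ghost (x * y) := gmul hx y
        have hg2 : Ghost (ρ x * ρ y) := gmul (umap_ghost H1 H2 hx) _
        exact ghost_unique H2 (umap_ghost H1 H2 hxy) hg2
          (by rw [hτ, H2.1.map_mul, hτ, hτ, H1.1.map_mul])
      · by_cases hy : Ghost y
        · have hxy : Ghost (x * y) := by rw [mul_comm]; exact gmul hy x
          have hg2 : Ghost (ρ x * ρ y) := by rw [mul_comm]; exact gmul (umap_ghost H1 H2 hy) _
          exact ghost_unique H2 (umap_ghost H1 H2 hxy) hg2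
            (by rw [hτ, H2.1.map_mul, hτ, hτ, H1.1.map_mul])
        · by_cases h0 : x * y = 0
          · rw [h0, hz]
            symm
            apply tau_zero H2
            rw [H2.1.map_mul, hτ, hτ, ← H1.1.map_mul, h0, H1.1.map_zero]
          · have hxyg : ¬ Ghost (x * y) := by
              rcases H1.2.2.1 x y (Or.inl hx) (Or.inl hy) with h | h
              · exact h
              · exact absurd h h0
            have hTOZ2 : TangibleOrZero (ρ x * ρ y) :=
              H2.2.2.1 _ _ (Or.inl (umap_not_ghost H1 H2 hx)) (Or.inl (umap_not_ghost H1 H2 hy))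
            exact tang_unique H2 (umap_toz H1 H2 hxyg) hTOZ2
              (by rw [hτ, H2.1.map_mul, hτ, hτ, ← H1.1.map_mul])
    · exact ghost_unique H2 (umap_ghost H1 H2 ge') ge'
        (by rw [hτ, H1.1.map_e, H2.1.map_e])
    · intro x y hx hy hle
      exact le_reflect H2 (umap_ghost H1 H2 hx) (umap_ghost H1 H2 hy)
        (by rw [hτ, hτ]; exact H1.1.mono x y hx hy hle)
  have hls : ∀ w : W1, σ (ρ w) = w := by
    intro w
    by_cases hg : Ghost w
    · exact ghost_unique H1 (umap_ghost H2 H1 (umap_ghost H1 H2 hg)) hg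
        (by rw [hτ', hτ])
    · exact tang_unique H1 (umap_toz H2 H1 (umap_not_ghost H1 H2 hg)) (Or.inl hg)
        (by rw [hτ', hτ])
  have hrs : ∀ w : W2, ρ (σ w) = w := by
    intro w
    by_cases hg : Ghost w
    · exact ghost_unique H2 (umap_ghost H1 H2 (umap_ghost H2 H1 hg)) hg
        (by rw [hτ, hτ'])
    · exact tang_unique H2 (umap_toz H1 H2 (umap_not_ghost H2 H1 hg)) (Or.inl hg)
        (by rw [hτ, hτ'])
  have hbij : Function.Bijective ρ := Function.bijective_iff_has_inverse.mpr ⟨σ, hls, hrs⟩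
  refine ⟨ρ, ⟨htrans, hbij, hτ⟩, ?_⟩
  rintro ρ' ⟨ht', hb', hττ'⟩
  funext w
  by_cases hg : Ghost w
  · exact ghost_unique H2 (ghost_tau ht' hg) (umap_ghost H1 H2 hg)
      (by rw [hττ' w, hτ])
  · have hng' : ¬ Ghost (ρ' w) := by
      intro hgw
      rcases classify H2 (ρ' w) with ⟨htz, -⟩ | ⟨-, hgx⟩
      · have h00 : ρ' w = 0 := htz.resolve_left (fun hh => hh hgw)
        apply hg
        have hz1 : τ1 w = 0 := by rw [← hττ' w, h00, H2.1.map_zero]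
        rw [tau_zero H1 hz1]
        exact gzero
      · rw [hττ' w] at hgx
        obtain ⟨g, ⟨hgg, hτg⟩, -⟩ := H1.2.2.2.2.1 (τ1 w) hgx
        have heq : ρ' g = ρ' w :=
          ghost_unique H2 (ghost_tau ht' hgg) hgw (by rw [hττ' g, hττ' w, hτg])
        apply hg
        rw [← hb'.1 heq]
        exact hgg
    exact tang_unique H2 (Or.inl hng') (umap_toz H1 H2 hg) (by rw [hττ' w, hτ])

end UMap

section Construction

open scoped Classical

variable {U : Type u} [STM U]

def Unf (U : Type u) [STM U] (N : Set U) : Type u :=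
  {p : U × Bool // (p.2 = true → p.1 ∈ N ∧ p.1 ≠ 0) ∧ (p.2 = false → Ghost p.1)}

variable (N : Set U)

open scoped Classical in
noncomputable def unfMul (hmul : ∀ x ∈ N, ∀ y ∈ N, x * y ∈ N) (a b : Unf U N) : Unf U N :=
  ⟨(a.1.1 * b.1.1, if a.1.1 * b.1.1 = 0 then false else a.1.2 && b.1.2), by
    constructor
    · intro ht
      by_cases h0 : a.1.1 * b.1.1 = 0
      · rw [if_pos h0] at ht; exact absurd ht (by simp)
      · rw [if_neg h0] at ht
        obtain ⟨ha, hb⟩ := Bool.and_eq_true_iff.mp ht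
        exact ⟨hmul _ (a.2.1 ha).1 _ (b.2.1 hb).1, h0⟩
    · intro hf
      by_cases h0 : a.1.1 * b.1.1 = 0
      · rw [h0]; exact gzero
      · rw [if_neg h0] at hf
        rcases Bool.and_eq_false_iff.mp hf with ha | hb
        · exact gmul (a.2.2 ha) _
        · rw [mul_comm]; exact gmul (b.2.2 hb) _⟩

open scoped Classical in
noncomputable def unfOne (h1 : (1 : U) ∈ N) : Unf U N :=
  ⟨(1, if (1 : U) = 0 then false else true), by
    constructor
    · intro ht
      by_cases h0 : (1 : U) = 0
      · rw [if_pos h0] at ht; exact absurd ht (by simp)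
      · exact ⟨h1, h0⟩
    · intro hf
      by_cases h0 : (1 : U) = 0
      · rw [h0]; exact gzero
      · rw [if_neg h0] at hf; exact absurd hf (by simp)⟩

def unfZero : Unf U N :=
  ⟨(0, false), by refine ⟨fun h => absurd h (by simp), fun _ => gzero⟩⟩

def unfE : Unf U N :=
  ⟨(STM.e, false), by refine ⟨fun h => absurd h (by simp), fun _ => ge'⟩⟩

variable (h1 : (1 : U) ∈ N) (hmul : ∀ x ∈ N, ∀ y ∈ N, x * y ∈ N)

lemma unfMul_comm (a b : Unf U N) : unfMul N hmul a b = unfMul N hmul b a := by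
  apply Subtype.ext
  apply Prod.ext
  · exact mul_comm _ _
  · show (if a.1.1 * b.1.1 = 0 then false else a.1.2 && b.1.2)
       = (if b.1.1 * a.1.1 = 0 then false else b.1.2 && a.1.2)
    rw [mul_comm a.1.1, Bool.and_comm]

lemma unfMul_assoc (a b c : Unf U N) :
    unfMul N hmul (unfMul N hmul a b) c = unfMul N hmul a (unfMul N hmul b c) := by
  apply Subtype.ext
  apply Prod.ext
  · exact mul_assoc _ _ _
  · show (if (a.1.1 * b.1.1) * c.1.1 = 0 then false
        else (if a.1.1 * b.1.1 = 0 then false else a.1.2 && b.1.2) && c.1.2)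
      = (if a.1.1 * (b.1.1 * c.1.1) = 0 then false
        else a.1.2 && (if b.1.1 * c.1.1 = 0 then false else b.1.2 && c.1.2))
    by_cases h : (a.1.1 * b.1.1) * c.1.1 = 0
    · have h' : a.1.1 * (b.1.1 * c.1.1) = 0 := by rw [← mul_assoc]; exact h
      rw [if_pos h, if_pos h']
    · have hab : ¬ a.1.1 * b.1.1 = 0 := fun hh => h (by rw [hh, STM.zero_mul'])
      have hbc : ¬ b.1.1 * c.1.1 = 0 := fun hh => h (by rw [mul_assoc, hh, mzero])
      have h' : ¬ a.1.1 * (b.1.1 * c.1.1) = 0 := by rw [← mul_assoc]; exact h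
      rw [if_neg h, if_neg hab, if_neg h', if_neg hbc, Bool.and_assoc]

lemma unfMul_one_mul (b : Unf U N) : unfMul N hmul (unfOne N h1) b = b := by
  apply Subtype.ext
  apply Prod.ext
  · exact one_mul _
  · show (if (1 : U) * b.1.1 = 0 then false
        else (if (1 : U) = 0 then false else true) && b.1.2) = b.1.2
    rw [one_mul]
    cases hb : b.1.2 with
    | true =>
      have hbn := b.2.1 hb
      have h10 : (1 : U) ≠ 0 := by
        intro h
        exact hbn.2 (by rw [← one_mul b.1.1, h, STM.zero_mul'])
      rw [if_neg hbn.2, if_neg h10, Bool.true_and]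
    | false =>
      by_cases h0 : b.1.1 = 0
      · rw [if_pos h0]
      · rw [if_neg h0, Bool.and_false]

noncomputable def unfSTM : STM (Unf U N) where
  mul := unfMul N hmul
  one := unfOne N h1
  zero := unfZero N
  mul_assoc := unfMul_assoc N hmul
  one_mul := unfMul_one_mul N h1 hmul
  mul_one a := by
    show unfMul N hmul a (unfOne N h1) = a
    rw [unfMul_comm]
    exact unfMul_one_mul N h1 hmul a
  mul_comm := unfMul_comm N hmul
  zero_mul' a := by
    apply Subtype.ext
    apply Prod.ext
    · exact STM.zero_mul' _
    · show (if (0 : U) * a.1.1 = 0 then false else false && a.1.2) = false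
      rw [if_pos (STM.zero_mul' _)]
  e := unfE N
  e_idem := by
    apply Subtype.ext
    apply Prod.ext
    · exact STM.e_idem
    · show (if (STM.e : U) * STM.e = 0 then false else false && false) = false
      rw [Bool.false_and, ite_self]
  ghost_zero a ha := by
    have h1' : STM.e * a.1.1 = 0 := congrArg (fun w : Unf U N => w.1.1) ha
    have h2' : a.1.1 = 0 := STM.ghost_zero _ h1'
    apply Subtype.ext
    apply Prod.ext
    · exact h2'
    · show a.1.2 = false
      cases hb : a.1.2 with
      | true => exact absurd h2' (a.2.1 hb).2
      | false => rfl
  le a b := STM.le a.1.1 b.1.1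
  le_refl a := STM.le_refl _
  le_trans a b c := STM.le_trans _ _ _
  le_total a b := STM.le_total _ _
  le_antisymm a b ha hb hab hba := by
    have ha1 : STM.e * a.1.1 = a.1.1 := congrArg (fun w : Unf U N => w.1.1) ha
    have hb1 : STM.e * b.1.1 = b.1.1 := congrArg (fun w : Unf U N => w.1.1) hb
    have ha2 : a.1.2 = false := by
      have h : (unfMul N hmul (unfE N) a).1.2 = a.1.2 :=
        congrArg (fun w : Unf U N => w.1.2) ha
      rw [← h]
      show (if STM.e * a.1.1 = 0 then false else false && a.1.2) = false
      rw [Bool.false_and, ite_self]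
    have hb2 : b.1.2 = false := by
      have h : (unfMul N hmul (unfE N) b).1.2 = b.1.2 :=
        congrArg (fun w : Unf U N => w.1.2) hb
      rw [← h]
      show (if STM.e * b.1.1 = 0 then false else false && b.1.2) = false
      rw [Bool.false_and, ite_self]
    apply Subtype.ext
    apply Prod.ext
    · exact STM.le_antisymm _ _ ha1 hb1 hab hba
    · rw [ha2, hb2]
  le_e a b := STM.le_e a.1.1 b.1.1
  mul_le_mul a b c h := STM.mul_le_mul _ _ _ h
  zero_le a := STM.zero_le _

lemma unf_ghost_iff (w : Unf U N) :
    @Ghost (Unf U N) (unfSTM N h1 hmul) w ↔ w.1.2 = false := by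
  show unfMul N hmul (unfE N) w = w ↔ w.1.2 = false
  constructor
  · intro hg
    have h2 : (unfMul N hmul (unfE N) w).1.2 = w.1.2 :=
      congrArg (fun v : Unf U N => v.1.2) hg
    rw [← h2]
    show (if STM.e * w.1.1 = 0 then false else false && w.1.2) = false
    rw [Bool.false_and, ite_self]
  · intro hb
    have hg : Ghost w.1.1 := w.2.2 hb
    apply Subtype.ext
    apply Prod.ext
    · exact hg
    · show (if STM.e * w.1.1 = 0 then false else false && w.1.2) = w.1.2
      rw [Bool.false_and, ite_self, hb]

lemma unf_toz_iff (w : Unf U N) :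
    @TangibleOrZero (Unf U N) (unfSTM N h1 hmul) w ↔ (w.1.2 = true ∨ w.1.1 = 0) := by
  constructor
  · rintro (h | h)
    · left
      cases hb : w.1.2 with
      | true => rfl
      | false => exact absurd ((unf_ghost_iff N h1 hmul w).mpr hb) h
    · right
      exact congrArg (fun v : Unf U N => v.1.1) h
  · rintro (h | h)
    · left
      rw [unf_ghost_iff N h1 hmul w, h]
      simp
    · right
      have hb : w.1.2 = false := by
        cases hb : w.1.2 with
        | true => exact absurd h (w.2.1 hb).2
        | false => rfl
      apply Subtype.ext
      exact Prod.ext h hb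

lemma unf_isUnfolding (h0 : (0 : U) ∈ N) (htang : ∀ x : U, ¬ Ghost x → x ∈ N) :
    @IsUnfolding U _ (Unf U N) (unfSTM N h1 hmul) (fun w => w.1.1) N := by
  letI : STM (Unf U N) := unfSTM N h1 hmul
  have hmd : ∀ a b : Unf U N, a * b = unfMul N hmul a b := fun _ _ => rfl
  have hzd : (0 : Unf U N) = unfZero N := rfl
  refine ⟨⟨rfl, rfl, fun _ _ => rfl, rfl, fun _ _ _ _ h => h⟩, ?_, ?_, ?_, ?_, ?_⟩
  · -- surjective
    intro x
    by_cases hg : Ghost x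
    · exact ⟨⟨(x, false), ⟨fun h => absurd h (by simp), fun _ => hg⟩⟩, rfl⟩
    · have hx0 : x ≠ 0 := fun h => hg (h ▸ gzero)
      exact ⟨⟨(x, true), ⟨fun _ => ⟨htang x hg, hx0⟩, fun h => absurd h (by simp)⟩⟩, rfl⟩
  · -- unfolded
    intro a b ha hb
    rw [unf_toz_iff N h1 hmul] at ha hb ⊢
    rw [hmd]
    rcases ha with ha | ha
    · rcases hb with hb | hb
      · by_cases hab : a.1.1 * b.1.1 = 0
        · right; exact hab
        · left
          show (if a.1.1 * b.1.1 = 0 then false else a.1.2 && b.1.2) = true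
          rw [if_neg hab, ha, hb]
          rfl
      · right
        show a.1.1 * b.1.1 = 0
        rw [hb, mzero]
    · right
      show a.1.1 * b.1.1 = 0
      rw [ha, STM.zero_mul']
  · -- tangible fibers
    intro x hx
    by_cases hx0 : x = 0
    · refine ⟨unfZero N, ⟨(unf_toz_iff N h1 hmul _).mpr (Or.inr rfl), hx0.symm⟩, ?_⟩
      rintro w ⟨-, hw⟩
      have hw0 : w.1.1 = 0 := hw.trans hx0
      have hb : w.1.2 = false := by
        cases hb : w.1.2 with
        | true => exact absurd hw0 (w.2.1 hb).2
        | false => rfl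
      exact Subtype.ext (Prod.ext hw0 hb)
    · refine ⟨⟨(x, true), ⟨fun _ => ⟨hx, hx0⟩, fun h => absurd h (by simp)⟩⟩,
        ⟨(unf_toz_iff N h1 hmul _).mpr (Or.inl rfl), rfl⟩, ?_⟩
      rintro w ⟨htoz, hw⟩
      rw [unf_toz_iff N h1 hmul] at htoz
      have hb : w.1.2 = true := by
        rcases htoz with h | h
        · exact h
        · exact absurd (h ▸ hw : (0:U) = x).symm hx0
      exact Subtype.ext (Prod.ext hw hb)
  · -- ghost fibers
    intro x hx
    refine ⟨⟨(x, false), ⟨fun h => absurd h (by simp), fun _ => hx⟩⟩,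
      ⟨(unf_ghost_iff N h1 hmul _).mpr rfl, rfl⟩, ?_⟩
    rintro w ⟨hgw, hw⟩
    have hb : w.1.2 = false := (unf_ghost_iff N h1 hmul _).mp hgw
    exact Subtype.ext (Prod.ext hw hb)
  · -- classification
    intro x w hw
    cases hb : w.1.2 with
    | true =>
      exact Or.inl ⟨(unf_toz_iff N h1 hmul _).mpr (Or.inl hb), hw ▸ (w.2.1 hb).1⟩
    | false =>
      exact Or.inr ⟨(unf_ghost_iff N h1 hmul _).mpr hb, hw ▸ w.2.2 hb⟩

end Construction

/-- Existence and uniqueness (up to unique isomorphism over `U`) of the unfolding of a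
supertropical monoid `U` along a submonoid `N` containing all tangibles and `0`. -/
theorem unfolding_exists_unique {U : Type u} [STM U] (N : Set U)
    (h1 : (1 : U) ∈ N) (h0 : (0 : U) ∈ N)
    (hmul : ∀ x ∈ N, ∀ y ∈ N, x * y ∈ N)
    (htang : ∀ x : U, ¬ Ghost x → x ∈ N) :
    (∃ (W : Type u) (sW : STM W) (τ : W → U), @IsUnfolding U _ W sW τ N) ∧
    (∀ (W1 W2 : Type u) [STM W1] [STM W2] (τ1 : W1 → U) (τ2 : W2 → U),
      IsUnfolding τ1 N → IsUnfolding τ2 N →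
      ∃! ρ : W1 → W2, IsTransmission ρ ∧ Function.Bijective ρ ∧
        ∀ w : W1, τ2 (ρ w) = τ1 w) := by
  constructor
  · exact ⟨Unf U N, unfSTM N h1 hmul, fun w => w.1.1, unf_isUnfolding N h1 hmul h0 htang⟩
  · intro W1 W2 _ _ τ1 τ2 H1 H2
    exact iso_unique h1 H1 H2
end
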